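/- Let 0 < ε < 1 and let ρ be a finite Borel measure supported on the set [0,ε] ∪ {1}, with ρ({0}) = 0. Let σ be the measure σ(dλ) = λ ρ(dλ), and assume σ((0,ε]) > 0 and σ({1}) > 0. Suppose there is a real number b such that exp(2ε(1+b)²/(1-ε)²) · max( σ((0,ε])/σ({1}), σ({1})/σ((0,ε]) ) ≤ b ≤ 1/(2ε) − 1. Define the Steepest Descent iterates q_0 = 1, α_n = (∫ λ q_n(λ)² ρ(dλ)) / (∫ λ² q_n(λ)² ρ(dλ)), q_{n+1}(λ) = (1-α_nλ)q_n(λ). Then α_n ≤ 1/(2ε) for every n ≥ 0. -/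

import Mathlib

open MeasureTheory Filter Set

open Real

open Real

private lemma sd_id (S S2 S3 T α : ℝ) (hD : 0 < S2 + T) (hα : α = (S+T)/(S2+T)) :
    (α^2*S3 - 2*α*S2 + S)*S*(S2+T)^2 = (S-S2)^2*T^2 + (S+T)^2*(S*S3-S2^2) ∧
    ((1-α)^2*T)*T*(S2+T)^2 = (S-S2)^2*T^2 := by
  have hαD : α * (S2+T) = S + T := by rw [hα]; field_simp
  constructor
  · linear_combination (S*S3*(α*(S2+T) + (S+T)) - 2*S2*S*(S2+T)) * hαD
  · linear_combination (-(((1-α)*(S2+T) + S2 - S) * T^2)) * hαD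

private lemma sd_dd (ε α S S2 S3 S4 : ℝ)
    (hXnn : 0 ≤ S*S3 - S2^2)
    (hcube : S*S4 - S2*S3 ≤ 2*ε*(S*S3-S2^2))
    (hα1 : 1 ≤ α) (hαε : α*ε ≤ 1/2) :
    S*S3 - S2^2 ≤ S2*(α^2*S3 - 2*α*S2 + S) - S*(α^2*S4 - 2*α*S3 + S2) := by
  have hα0 : (0:ℝ) < α := by linarith
  have eq1 : S2*(α^2*S3 - 2*α*S2 + S) - S*(α^2*S4 - 2*α*S3 + S2)
      = 2*α*(S*S3 - S2^2) - α^2*(S*S4 - S2*S3) := by ring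
  have e1 : α^2*(S*S4 - S2*S3) ≤ α^2*(2*ε*(S*S3 - S2^2)) :=
    mul_le_mul_of_nonneg_left hcube (sq_nonneg α)
  have e2 : α^2*(2*ε*(S*S3 - S2^2)) ≤ α*(S*S3 - S2^2) := by
    have h3 : 0 ≤ (α*(S*S3 - S2^2))*(1 - 2*(α*ε)) :=
      mul_nonneg (mul_nonneg hα0.le hXnn) (by linarith)
    linarith [h3]
  have e3 : (S*S3 - S2^2) ≤ α*(S*S3 - S2^2) := by
    linarith [mul_nonneg (sub_nonneg.2 hα1) hXnn]
  linarith [eq1, e1, e2, e3]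

private lemma sd_alpha (ε b S S2 T α : ℝ) (hε0 : 0 < ε) (hε1 : ε < 1)
    (hb2 : b ≤ 1/(2*ε)-1)
    (hS : 0 < S) (hT : 0 < T) (hI2nn : 0 ≤ S2) (h2ε : S2 ≤ ε*S)
    (hSb : S ≤ b*T) (hα : α = (S+T)/(S2+T)) :
    α ≤ 1/(2*ε) ∧ 1 < α ∧ α*ε ≤ 1/2 := by
  have hD : 0 < S2 + T := by linarith
  have h2eb : 2*ε*b ≤ 1 - 2*ε := by
    have h := mul_le_mul_of_nonneg_left hb2 (by positivity : (0:ℝ) ≤ 2*ε)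
    rw [mul_sub, mul_one_div, div_self (by positivity : (2*ε) ≠ 0)] at h
    linarith
  have hαub : α ≤ 1/(2*ε) := by
    rw [hα, div_le_div_iff₀ hD (by positivity : (0:ℝ) < 2*ε)]
    have a1 : 2*ε*S ≤ 2*ε*(b*T) := mul_le_mul_of_nonneg_left hSb (by positivity)
    have a2 : 2*ε*b*T ≤ (1-2*ε)*T := mul_le_mul_of_nonneg_right h2eb hT.le
    nlinarith
  have hα1 : 1 < α := by
    rw [hα, lt_div_iff₀ hD]
    have h4 := mul_lt_mul_of_pos_right hε1 hS
    nlinarith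
  refine ⟨hαub, hα1, ?_⟩
  have h5 := mul_le_mul_of_nonneg_right hαub hε0.le
  rw [div_mul_eq_mul_div, one_mul] at h5
  calc α*ε ≤ ε/(2*ε) := h5
    _ = 1/2 := by field_simp

private lemma sd_S1 (ε α S S2 S3 : ℝ) (hS : 0 < S)
    (hI2nn : 0 ≤ S2) (h2ε : S2 ≤ ε*S) (h3ε : S3 ≤ ε*S2)
    (hCS : S2^2 ≤ S*S3) (hα0 : 0 < α) (hαε : α*ε ≤ 1/2) :
    0 < α^2*S3 - 2*α*S2 + S ∧ α^2*S3 - 2*α*S2 + S ≤ S := by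
  have hXnn : 0 ≤ S*S3 - S2^2 := sub_nonneg.2 hCS
  have hαS2 : α * S2 ≤ (1/2)*S := by
    have a1 : α * S2 ≤ α * (ε*S) := mul_le_mul_of_nonneg_left h2ε hα0.le
    have a2 : (α*ε)*S ≤ (1/2)*S := mul_le_mul_of_nonneg_right hαε hS.le
    nlinarith
  have hS1S : (S/2)^2 ≤ (S - α*S2)^2 := pow_le_pow_left₀ (by linarith) (by linarith) 2
  constructor
  · have key : S*(α^2*S3 - 2*α*S2 + S) = (S - α*S2)^2 + α^2*(S*S3 - S2^2) := by ring
    have pos : 0 < S*(α^2*S3 - 2*α*S2 + S) := by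
      have h6 := mul_pos hS hS
      have h7 := mul_nonneg (sq_nonneg α) hXnn
      nlinarith [hS1S]
    rcases mul_pos_iff.mp pos with ⟨_, h⟩ | ⟨h, _⟩
    · exact h
    · linarith
  · have a1 : α^2*S3 ≤ α^2*(ε*S2) := mul_le_mul_of_nonneg_left h3ε (sq_nonneg α)
    have a2 : (α*ε)*(α*S2) ≤ (1/2)*(α*S2) :=
      mul_le_mul_of_nonneg_right hαε (mul_nonneg hα0.le hI2nn)
    have a3 : 0 ≤ α*S2 := mul_nonneg hα0.le hI2nn
    linarith [a1, a2, a3]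

set_option maxHeartbeats 3000000 in
private lemma sd_main_step (ε b C B S S2 S3 S4 S1' S2' T T' α s0 : ℝ)
    (hε0 : 0 < ε) (hε1 : ε < 1)
    (hb2 : b ≤ 1/(2*ε) - 1)
    (hCdef : C = (1+b)^2/(1-ε)^2) (hB1 : 1 ≤ B)
    (hS : 0 < S) (hT : 0 < T)
    (hI2nn : 0 ≤ S2) (hI3nn : 0 ≤ S3)
    (h2ε : S2 ≤ ε*S) (h3ε : S3 ≤ ε*S2)
    (hCS : S2^2 ≤ S*S3)
    (hcube : S*S4 - S2*S3 ≤ 2*ε*(S*S3 - S2^2))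
    (hα : α = (S+T)/(S2+T))
    (hr1 : S1' = α^2*S3 - 2*α*S2 + S)
    (hr2 : S2' = α^2*S4 - 2*α*S3 + S2)
    (hTr : T' = (1-α)^2*T)
    (hM : max (S/T) (T/S) ≤ B * Real.exp (C*(s0 - S2/S)))
    (hs0 : 0 ≤ s0) (hs0e : s0 ≤ ε)
    (hb1 : Real.exp (2*ε*C)*B ≤ b) :
    α ≤ 1/(2*ε) ∧ 0 < S1' ∧ 0 < T' ∧
      max (S1'/T') (T'/S1') ≤ B * Real.exp (C*(s0 - S2'/S1')) := by
  have hC : 0 ≤ C := by rw [hCdef]; positivity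
  have hD : 0 < S2 + T := by linarith
  have hsn0 : 0 ≤ S2/S := div_nonneg hI2nn hS.le
  have hsne : S2/S ≤ ε := by rw [div_le_iff₀ hS]; linarith
  have hexparg : C*(s0 - S2/S) ≤ 2*ε*C := by
    have h9 := mul_le_mul_of_nonneg_left (show s0 - S2/S ≤ 2*ε by linarith) hC
    linarith
  have hBexp : B * Real.exp (C*(s0 - S2/S)) ≤ b := by
    calc B * Real.exp (C*(s0 - S2/S)) ≤ B * Real.exp (2*ε*C) :=
          mul_le_mul_of_nonneg_left (exp_le_exp.2 hexparg) (by linarith)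
      _ ≤ b := by rw [mul_comm]; exact hb1
  have hrb : S/T ≤ b := le_trans (le_trans (le_max_left _ _) hM) hBexp
  have htb : T/S ≤ b := le_trans (le_trans (le_max_right _ _) hM) hBexp
  have hSb : S ≤ b*T := by rw [div_le_iff₀ hT] at hrb; linarith
  have hbge1 : 1 ≤ b := by
    have := Real.one_le_exp (by positivity : (0:ℝ) ≤ 2*ε*C)
    nlinarith [Real.exp_pos (2*ε*C)]
  obtain ⟨hαub, hα1, hαε⟩ := sd_alpha ε b S S2 T α hε0 hε1 hb2 hS hT hI2nn h2ε hSb hα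
  have hα0 : (0:ℝ) < α := by linarith
  obtain ⟨hid, hTT⟩ := sd_id S S2 S3 T α hD hα
  rw [← hr1] at hid
  rw [← hTr] at hTT
  obtain ⟨hS1pos', hS1le'⟩ := sd_S1 ε α S S2 S3 hS hI2nn h2ε h3ε hCS hα0 hαε
  have hS1pos : 0 < S1' := by rw [hr1]; exact hS1pos'
  have hS1le : S1' ≤ S := by rw [hr1]; exact hS1le'
  have hT1pos : 0 < T' := by
    rw [hTr]
    have h1 : (0:ℝ) < (1 - α)^2 := by
      have : 1 - α ≠ 0 := by intro h; nlinarith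
      positivity
    exact mul_pos h1 hT
  have hD2 : (0:ℝ) < (S2+T)^2 := by positivity
  have hXnn : 0 ≤ S*S3 - S2^2 := sub_nonneg.2 hCS
  have hGXnn : 0 ≤ (S+T)^2*(S*S3 - S2^2) := mul_nonneg (sq_nonneg _) hXnn
  have hlow : T'*T ≤ S1'*S := by
    by_contra hc
    push_neg at hc
    have h2 := mul_pos (by linarith : (0:ℝ) < T'*T - S1'*S) hD2
    linarith [hid, hTT, hGXnn, h2]
  have hdd : S*S3 - S2^2 ≤ S2*S1' - S*S2' := by
    have h8 := sd_dd ε α S S2 S3 S4 hXnn hcube hα1.le hαε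
    rw [← hr1, ← hr2] at h8
    exact h8
  have hVle : (S*S3 - S2^2)/S^2 ≤ S2/S - S2'/S1' := by
    have h1 : S2/S - S2'/S1' = (S2*S1' - S*S2')/(S*S1') :=
      div_sub_div S2 S2' hS.ne' hS1pos.ne'
    rw [h1]
    calc (S*S3 - S2^2)/S^2 ≤ (S*S3 - S2^2)/(S*S1') := by
          apply div_le_div_of_nonneg_left hXnn (mul_pos hS hS1pos)
          linarith [mul_le_mul_of_nonneg_left hS1le hS.le]
      _ ≤ (S2*S1' - S*S2')/(S*S1') :=
          div_le_div_of_nonneg_right hdd (mul_pos hS hS1pos).le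
  have hdnn : 0 ≤ (S*S3 - S2^2)/S^2 := div_nonneg hXnn (sq_nonneg S)
  have hDnn : 0 ≤ S2/S - S2'/S1' := le_trans hdnn hVle
  have hup : S1'*S ≤ (1 + C*(S2/S - S2'/S1'))*(T'*T) := by
    have hX1 : S*S3 - S2^2 ≤ (S2/S - S2'/S1')*S^2 :=
      (div_le_iff₀ (by positivity : (0:ℝ) < S^2)).1 hVle
    have hG : S + T ≤ (1+b)*T := by linarith [hSb]
    have hGnn : (0:ℝ) ≤ S + T := by linarith
    have c1 : (S+T)^2 ≤ (1+b)^2*T^2 := by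
      have := pow_le_pow_left₀ hGnn hG 2
      calc (S+T)^2 ≤ ((1+b)*T)^2 := this
        _ = (1+b)^2*T^2 := by ring
    have hCe : C*(1-ε)^2 = (1+b)^2 := by
      rw [hCdef]
      exact div_mul_cancel₀ _ (pow_ne_zero 2 (by linarith : (1:ℝ)-ε ≠ 0))
    rw [← hCe] at c1
    have hSS2 : (1-ε)*S ≤ S - S2 := by linarith [h2ε]
    have hSS2nn : (0:ℝ) ≤ (1-ε)*S := mul_nonneg (by linarith) hS.le
    have c4 : (1-ε)^2*S^2 ≤ (S - S2)^2 := by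
      have := pow_le_pow_left₀ hSS2nn hSS2 2
      calc (1-ε)^2*S^2 = ((1-ε)*S)^2 := by ring
        _ ≤ (S-S2)^2 := this
    have t1 : (S+T)^2*(S*S3 - S2^2) ≤ C*(1-ε)^2*T^2*(S*S3 - S2^2) :=
      mul_le_mul_of_nonneg_right c1 hXnn
    have t2 : C*(1-ε)^2*T^2*(S*S3 - S2^2)
        ≤ C*(1-ε)^2*T^2*((S2/S - S2'/S1')*S^2) :=
      mul_le_mul_of_nonneg_left hX1
        (mul_nonneg (mul_nonneg hC (sq_nonneg (1-ε))) (sq_nonneg T))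
    have t4 : C*(S2/S - S2'/S1')*T^2*((1-ε)^2*S^2)
        ≤ C*(S2/S - S2'/S1')*T^2*((S-S2)^2) :=
      mul_le_mul_of_nonneg_left c4
        (mul_nonneg (mul_nonneg hC hDnn) (sq_nonneg T))
    have hgoal2 : S1'*S*(S2+T)^2 ≤ (1 + C*(S2/S - S2'/S1'))*(T'*T)*(S2+T)^2 := by
      have expand : (1 + C*(S2/S - S2'/S1'))*(T'*T)*(S2+T)^2
          = T'*T*(S2+T)^2 + C*(S2/S - S2'/S1')*(T'*T*(S2+T)^2) := by ring
      rw [expand, hTT, hid]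
      have hmain : (S+T)^2*(S*S3-S2^2) ≤ C*(S2/S - S2'/S1')*((S-S2)^2*T^2) := by
        linarith [t1, t2, t4]
      linarith [hmain]
    exact le_of_mul_le_mul_right hgoal2 hD2
  have hee : Real.exp (C*(S2/S - S2'/S1')) * Real.exp (C*(s0 - S2/S))
      = Real.exp (C*(s0 - S2'/S1')) := by
    rw [← Real.exp_add]; ring_nf
  have hM1 : S1'/T' ≤ B * Real.exp (C*(s0 - S2'/S1')) := by
    have k1 : S1'*S ≤ Real.exp (C*(S2/S - S2'/S1'))*(T'*T) :=
      le_trans hup (mul_le_mul_of_nonneg_right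
        (by linarith [Real.add_one_le_exp (C*(S2/S - S2'/S1'))])
        (mul_pos hT1pos hT).le)
    have k3 : T/S ≤ B*Real.exp (C*(s0 - S2/S)) := le_trans (le_max_right _ _) hM
    have hTS : T/S*S = T := div_mul_cancel₀ T hS.ne'
    have keq : Real.exp (C*(S2/S - S2'/S1'))*(T'*T)
        = (Real.exp (C*(S2/S - S2'/S1'))*(T/S))*(T'*S) := by
      linear_combination (-(Real.exp (C*(S2/S - S2'/S1'))*T')) * hTS
    have k4 : (Real.exp (C*(S2/S - S2'/S1'))*(T/S))*(T'*S)
        ≤ (Real.exp (C*(S2/S - S2'/S1'))*(B*Real.exp (C*(s0 - S2/S))))*(T'*S) :=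
      mul_le_mul_of_nonneg_right
        (mul_le_mul_of_nonneg_left k3 (Real.exp_nonneg _))
        (mul_nonneg hT1pos.le hS.le)
    have k5 : Real.exp (C*(S2/S - S2'/S1'))*(B*Real.exp (C*(s0 - S2/S)))
        = B*Real.exp (C*(s0 - S2'/S1')) := by
      rw [← hee]; ring
    rw [div_le_iff₀ hT1pos]
    have k6 : S1'*S ≤ (B*Real.exp (C*(s0 - S2'/S1'))*T')*S := by
      rw [k5] at k4
      calc S1'*S ≤ _ := k1
        _ = _ := keq
        _ ≤ B*Real.exp (C*(s0 - S2'/S1'))*(T'*S) := k4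
        _ = (B*Real.exp (C*(s0 - S2'/S1'))*T')*S := by ring
    exact le_of_mul_le_mul_right k6 hS
  have hM2 : T'/S1' ≤ B * Real.exp (C*(s0 - S2'/S1')) := by
    have k1 : T'/S1' ≤ S/T := by
      rw [div_le_div_iff₀ hS1pos hT]
      linarith [hlow]
    refine le_trans (le_trans k1 (le_trans (le_max_left _ _) hM)) ?_
    have k2 : Real.exp (C*(s0 - S2/S)) ≤ Real.exp (C*(s0 - S2'/S1')) := by
      apply Real.exp_le_exp.2
      have := mul_le_mul_of_nonneg_left (show s0 - S2/S ≤ s0 - S2'/S1' by linarith) hC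
      linarith
    exact mul_le_mul_of_nonneg_left k2 (by linarith)
  exact ⟨hαub, hS1pos, hT1pos, max_le hM1 hM2⟩

open MeasureTheory Filter Set


set_option maxHeartbeats 2000000 in
/-- Steepest Descent on a spectral measure concentrated on `[0,ε] ∪ {1}`: under the
balance condition on `σ(dλ) = λρ(dλ)` involving a constant `b`, all SD learning rates
are bounded by `1/(2ε)`. -/
theorem steepest_descent_two_cluster_rate_bound
    (ε : ℝ) (hε0 : 0 < ε) (hε1 : ε < 1)
    (ρ : Measure ℝ) [IsFiniteMeasure ρ]
    (hsupp : ρ (Set.Icc (0:ℝ) ε ∪ {(1:ℝ)})ᶜ = 0)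
    (h0 : ρ {(0:ℝ)} = 0)
    (σ : Measure ℝ)
    (hσ : σ = ρ.withDensity (fun l => ENNReal.ofReal l))
    (hσpos : 0 < (σ (Set.Ioc 0 ε)).toReal)
    (hσ1 : 0 < (σ {(1:ℝ)}).toReal)
    (b : ℝ)
    (hb1 : Real.exp (2 * ε * (1 + b) ^ 2 / (1 - ε) ^ 2) *
        max ((σ (Set.Ioc 0 ε)).toReal / (σ {(1:ℝ)}).toReal)
            ((σ {(1:ℝ)}).toReal / (σ (Set.Ioc 0 ε)).toReal) ≤ b)
    (hb2 : b ≤ 1 / (2 * ε) - 1)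
    (q : ℕ → ℝ → ℝ) (A : ℕ → ℝ)
    (hq0 : ∀ l, q 0 l = 1)
    (hA : ∀ n, A n = (∫ l, l * (q n l) ^ 2 ∂ρ) / ∫ l, l ^ 2 * (q n l) ^ 2 ∂ρ)
    (hqrec : ∀ n l, q (n + 1) l = (1 - A n * l) * q n l) :
    ∀ n : ℕ, A n ≤ 1 / (2 * ε) := by
  -- Infrastructure
  have hrestrict : ρ.restrict (Set.Icc (0:ℝ) ε ∪ {(1:ℝ)}) = ρ := by
    apply Measure.restrict_eq_self_of_ae_mem
    exact ae_iff.2 hsupp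
  have hqc : ∀ n, Continuous (q n) := by
    intro n
    induction n with
    | zero => simpa [funext hq0] using continuous_const
    | succ n ih =>
      have : q (n+1) = fun l => (1 - A n * l) * q n l := funext (hqrec n)
      rw [this]; fun_prop
  have hint : ∀ f : ℝ → ℝ, Continuous f → Integrable f ρ := by
    intro f hf
    rw [← hrestrict]
    exact hf.continuousOn.integrableOn_compact (isCompact_Icc.union isCompact_singleton)
  have hIntOn : ∀ (f : ℝ → ℝ), Continuous f → IntegrableOn f (Set.Ioc 0 ε) ρ :=
    fun f hf => (hint f hf).integrableOn
  have hcq : ∀ (j n : ℕ), Continuous fun l : ℝ => l^j * (q n l)^2 :=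
    fun j n => (continuous_pow j).mul ((hqc n).pow 2)
  have hcpoly : ∀ (n : ℕ) (a c d e : ℝ),
      Continuous fun l : ℝ => (a*l^4 + c*l^3 + d*l^2 + e*l^1) * (q n l)^2 :=
    fun n a c d e =>
      ((((continuous_const.mul (continuous_pow 4)).add
        (continuous_const.mul (continuous_pow 3))).add
        (continuous_const.mul (continuous_pow 2))).add
        (continuous_const.mul (continuous_pow 1))).mul ((hqc n).pow 2)
  set I : ℕ → ℕ → ℝ := fun j n => ∫ l in Set.Ioc 0 ε, l^j * (q n l)^2 ∂ρ with hIdef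
  set T : ℕ → ℝ := fun n => (ρ {(1:ℝ)}).toReal * (q n 1)^2 with hTdef
  have hInn : ∀ j n, 0 ≤ I j n := by
    intro j n
    exact setIntegral_nonneg measurableSet_Ioc
      (fun l hl => mul_nonneg (pow_nonneg hl.1.le j) (sq_nonneg _))
  have hIstep : ∀ j n, I (j+1) n ≤ ε * I j n := by
    intro j n
    have h1 : I (j+1) n ≤ ∫ l in Set.Ioc 0 ε, ε * (l^j * (q n l)^2) ∂ρ := by
      apply setIntegral_mono_on (hIntOn _ (hcq (j+1) n))
        ((hIntOn _ (hcq j n)).const_mul ε) measurableSet_Ioc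
      intro l hl
      rw [pow_succ]
      nlinarith [mul_nonneg (mul_nonneg (sub_nonneg.2 hl.2) (pow_nonneg hl.1.le j))
        (sq_nonneg (q n l))]
    calc I (j+1) n ≤ _ := h1
      _ = ε * I j n := by rw [integral_const_mul]
  have hlin : ∀ (n : ℕ) (a c d e : ℝ), ∫ l in Set.Ioc 0 ε,
      (a*l^4 + c*l^3 + d*l^2 + e*l^1) * (q n l)^2 ∂ρ
      = a * I 4 n + c * I 3 n + d * I 2 n + e * I 1 n := by
    intro n a c d e
    have h4 : IntegrableOn (fun l : ℝ => a*(l^4*(q n l)^2)) (Set.Ioc 0 ε) ρ :=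
      (hIntOn _ (hcq 4 n)).const_mul a
    have h3 : IntegrableOn (fun l : ℝ => c*(l^3*(q n l)^2)) (Set.Ioc 0 ε) ρ :=
      (hIntOn _ (hcq 3 n)).const_mul c
    have h2 : IntegrableOn (fun l : ℝ => d*(l^2*(q n l)^2)) (Set.Ioc 0 ε) ρ :=
      (hIntOn _ (hcq 2 n)).const_mul d
    have h1 : IntegrableOn (fun l : ℝ => e*(l^1*(q n l)^2)) (Set.Ioc 0 ε) ρ :=
      (hIntOn _ (hcq 1 n)).const_mul e
    have h43 : IntegrableOn (fun l : ℝ => a*(l^4*(q n l)^2) + c*(l^3*(q n l)^2))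
      (Set.Ioc 0 ε) ρ := h4.add h3
    have h21 : IntegrableOn (fun l : ℝ => d*(l^2*(q n l)^2) + e*(l^1*(q n l)^2))
      (Set.Ioc 0 ε) ρ := h2.add h1
    have heq : (fun l : ℝ => (a*l^4 + c*l^3 + d*l^2 + e*l^1) * (q n l)^2)
        = fun l => (a*(l^4*(q n l)^2) + c*(l^3*(q n l)^2))
          + (d*(l^2*(q n l)^2) + e*(l^1*(q n l)^2)) := funext fun l => by ring
    rw [heq, integral_add h43 h21, integral_add h4 h3, integral_add h2 h1,
      integral_const_mul, integral_const_mul, integral_const_mul, integral_const_mul]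
    simp only [hIdef]
    ring
  -- decomposition of full integrals
  have hdecomp : ∀ (n j : ℕ), ∫ l, l^j * (q n l)^2 ∂ρ = I j n + T n := by
    intro n j
    have h1 : (1:ℝ) ∉ Set.Icc (0:ℝ) ε := by simp [hε1.not_ge]
    have hdisj : Disjoint (Set.Icc (0:ℝ) ε) {(1:ℝ)} := Set.disjoint_singleton_right.2 h1
    have hae : (Set.Icc (0:ℝ) ε : Set ℝ) =ᵐ[ρ] Set.Ioc 0 ε := by
      apply (MeasureTheory.ae_eq_set).2
      constructor
      · refine measure_mono_null ?_ h0
        intro x hx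
        rcases hx with ⟨⟨ha, hb⟩, h3⟩
        have : x ≤ 0 := by
          by_contra h
          push_neg at h
          exact h3 ⟨h, hb⟩
        simp [le_antisymm this ha]
      · refine measure_mono_null ?_ h0
        intro x hx
        rcases hx with ⟨⟨ha, hb⟩, h3⟩
        exact absurd ⟨ha.le, hb⟩ h3
    simp only [hIdef, hTdef]
    calc ∫ l, l^j * (q n l)^2 ∂ρ
        = ∫ l in (Set.Icc (0:ℝ) ε ∪ {(1:ℝ)}), l^j * (q n l)^2 ∂ρ := by
          conv_lhs => rw [← hrestrict]
      _ = (∫ l in Set.Icc (0:ℝ) ε, l^j * (q n l)^2 ∂ρ)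
          + ∫ l in {(1:ℝ)}, l^j * (q n l)^2 ∂ρ := by
          exact setIntegral_union hdisj (measurableSet_singleton 1)
            (hint _ (hcq j n)).integrableOn (hint _ (hcq j n)).integrableOn
      _ = (∫ l in Set.Ioc 0 ε, l^j * (q n l)^2 ∂ρ) + (ρ {(1:ℝ)}).toReal * (q n 1)^2 := by
          rw [setIntegral_congr_set hae, integral_singleton]
          simp [mul_comm, measureReal_def]
  -- sigma identifications
  have hσIoc : (σ (Set.Ioc 0 ε)).toReal = I 1 0 := by
    have hnn : 0 ≤ᵐ[ρ.restrict (Set.Ioc 0 ε)] fun l : ℝ => l :=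
      (ae_restrict_iff' measurableSet_Ioc).2 (ae_of_all _ fun l hl => hl.1.le)
    have hia : (σ (Set.Ioc 0 ε)) = ENNReal.ofReal (∫ l in Set.Ioc 0 ε, l ∂ρ) := by
      rw [hσ, withDensity_apply _ measurableSet_Ioc,
        ← ofReal_integral_eq_lintegral_ofReal (hIntOn (fun l => l) continuous_id) hnn]
    rw [hia, ENNReal.toReal_ofReal
      (setIntegral_nonneg measurableSet_Ioc fun l hl => hl.1.le)]
    simp only [hIdef]
    apply setIntegral_congr_fun measurableSet_Ioc
    intro l hl
    simp [hq0]
  have hσone : (σ {(1:ℝ)}).toReal = T 0 := by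
    rw [hσ, withDensity_apply _ (measurableSet_singleton 1)]
    rw [lintegral_singleton]
    simp [hTdef, hq0]
  have hS0pos : 0 < I 1 0 := by rw [hσIoc] at hσpos; exact hσpos
  have hT0pos : 0 < T 0 := by rw [hσone] at hσ1; exact hσ1
  -- constants
  set C : ℝ := (1+b)^2/(1-ε)^2 with hCdef
  set B : ℝ := max (I 1 0 / T 0) (T 0 / I 1 0) with hBdef
  have hB1 : 1 ≤ B := by
    rcases le_total (T 0) (I 1 0) with h | h
    · exact le_trans ((one_le_div hT0pos).2 h) (le_max_left _ _)
    · exact le_trans ((one_le_div hS0pos).2 h) (le_max_right _ _)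
  have hb1' : Real.exp (2*ε*C)*B ≤ b := by
    rw [hσIoc, hσone] at hb1
    have e2 : 2*ε*C = 2 * ε * (1 + b) ^ 2 / (1 - ε) ^ 2 := by rw [hCdef]; ring
    rw [e2, hBdef]
    exact hb1
  have hs00 : 0 ≤ I 2 0 / I 1 0 := div_nonneg (hInn 2 0) hS0pos.le
  have hs0e : I 2 0 / I 1 0 ≤ ε := by
    rw [div_le_iff₀ hS0pos]
    linarith [hIstep 1 0]
  -- recursions
  have hrec1 : ∀ n, I 1 (n+1) = (A n)^2 * I 3 n - 2*(A n) * I 2 n + I 1 n := by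
    intro n
    have heq : (fun l : ℝ => l^1*(q (n+1) l)^2)
        = fun l => (0*l^4 + (A n)^2*l^3 + (-(2*A n))*l^2 + 1*l^1)*(q n l)^2 :=
      funext fun l => by rw [hqrec n l]; ring
    have : I 1 (n+1) = 0 * I 4 n + (A n)^2 * I 3 n + (-(2*A n)) * I 2 n + 1 * I 1 n := by
      rw [← hlin n]
      simp only [hIdef]
      rw [heq]
    rw [this]; ring
  have hrec2 : ∀ n, I 2 (n+1) = (A n)^2 * I 4 n - 2*(A n) * I 3 n + I 2 n := by
    intro n
    have heq : (fun l : ℝ => l^2*(q (n+1) l)^2)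
        = fun l => ((A n)^2*l^4 + (-(2*A n))*l^3 + 1*l^2 + 0*l^1)*(q n l)^2 :=
      funext fun l => by rw [hqrec n l]; ring
    have : I 2 (n+1) = (A n)^2 * I 4 n + (-(2*A n)) * I 3 n + 1 * I 2 n + 0 * I 1 n := by
      rw [← hlin n]
      simp only [hIdef]
      rw [heq]
    rw [this]; ring
  have hTrec : ∀ n, T (n+1) = (1 - A n)^2 * T n := by
    intro n
    simp only [hTdef]
    rw [hqrec n 1]
    ring
  have hA' : ∀ n, A n = (I 1 n + T n)/(I 2 n + T n) := by
    intro n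
    have d1 := hdecomp n 1
    have d2 := hdecomp n 2
    simp only [pow_one] at d1
    rw [hA n, d1, d2]
  -- Cauchy-Schwarz
  have hCSn : ∀ n, 0 < I 1 n → (I 2 n)^2 ≤ I 1 n * I 3 n := by
    intro n hS
    have hpt : ∀ l ∈ Set.Ioc (0:ℝ) ε,
        0 ≤ (0*l^4 + (I 1 n)^2*l^3 + (-(2*I 1 n*I 2 n))*l^2 + (I 2 n)^2*l^1)*(q n l)^2 := by
      intro l hl
      have e : (0*l^4 + (I 1 n)^2*l^3 + (-(2*I 1 n*I 2 n))*l^2 + (I 2 n)^2*l^1)*(q n l)^2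
          = (I 1 n*l - I 2 n)^2*(l*(q n l)^2) := by ring
      rw [e]
      exact mul_nonneg (sq_nonneg _) (mul_nonneg hl.1.le (sq_nonneg _))
    have h : 0 ≤ ∫ l in Set.Ioc 0 ε,
        (0*l^4 + (I 1 n)^2*l^3 + (-(2*I 1 n*I 2 n))*l^2 + (I 2 n)^2*l^1)*(q n l)^2 ∂ρ :=
      setIntegral_nonneg measurableSet_Ioc hpt
    rw [hlin] at h
    nlinarith [h, hS]
  -- cube covariance inequality
  have hcuben : ∀ n, 0 < I 1 n →
      I 1 n * I 4 n - I 2 n * I 3 n ≤ 2*ε*(I 1 n * I 3 n - (I 2 n)^2) := by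
    intro n hS
    have h2e := hIstep 1 n
    have h := setIntegral_mono_on
      (hIntOn _ (hcpoly n ((I 1 n)^3) (-((I 1 n)^2*I 2 n)) (-(I 1 n*(I 2 n)^2)) ((I 2 n)^3)))
      (hIntOn _ (hcpoly n 0 (2*ε*(I 1 n)^3) (-(4*ε*(I 1 n)^2*I 2 n)) (2*ε*I 1 n*(I 2 n)^2)))
      measurableSet_Ioc ?_
    · rw [hlin, hlin] at h
      nlinarith [h, mul_pos hS hS]
    · intro l hl
      have hfac : 0 ≤ 2*ε*I 1 n - (I 1 n*l + I 2 n) := by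
        have := mul_le_mul_of_nonneg_left hl.2 hS.le
        linarith [h2e]
      have prod : 0 ≤ (2*ε*I 1 n - (I 1 n*l + I 2 n))*((I 1 n*l - I 2 n)^2*l)*(q n l)^2 :=
        mul_nonneg (mul_nonneg hfac (mul_nonneg (sq_nonneg _) hl.1.le)) (sq_nonneg _)
      nlinarith [prod]
  -- main induction
  have step : ∀ n, (0 < I 1 n ∧ 0 < T n ∧
      max (I 1 n/T n) (T n/I 1 n) ≤ B*Real.exp (C*(I 2 0/I 1 0 - I 2 n/I 1 n))) →
      (A n ≤ 1/(2*ε) ∧ (0 < I 1 (n+1) ∧ 0 < T (n+1) ∧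
      max (I 1 (n+1)/T (n+1)) (T (n+1)/I 1 (n+1))
        ≤ B*Real.exp (C*(I 2 0/I 1 0 - I 2 (n+1)/I 1 (n+1))))) := by
    rintro n ⟨hS, hT, hM⟩
    obtain ⟨hαub, hS1pos, hT1pos, hMax⟩ :=
      sd_main_step ε b C B (I 1 n) (I 2 n) (I 3 n) (I 4 n) (I 1 (n+1)) (I 2 (n+1))
        (T n) (T (n+1)) (A n) (I 2 0/I 1 0)
        hε0 hε1 hb2 hCdef hB1 hS hT (hInn 2 n) (hInn 3 n)
        (hIstep 1 n) (hIstep 2 n) (hCSn n hS) (hcuben n hS)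
        (hA' n) (hrec1 n) (hrec2 n) (hTrec n) hM hs00 hs0e hb1'
    exact ⟨hαub, hS1pos, hT1pos, hMax⟩
  have key : ∀ n, (0 < I 1 n ∧ 0 < T n ∧
      max (I 1 n/T n) (T n/I 1 n) ≤ B*Real.exp (C*(I 2 0/I 1 0 - I 2 n/I 1 n))) := by
    intro n
    induction n with
    | zero =>
      refine ⟨hS0pos, hT0pos, ?_⟩
      have e : C*(I 2 0/I 1 0 - I 2 0/I 1 0) = 0 := by ring
      rw [e, Real.exp_zero, mul_one]
    | succ n ih => exact (step n ih).2
  intro n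
  exact (step n (key n)).1
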